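/- Let 0 < κ < 1, r > 0, s > 0, η ≥ 0 and let I = (I_j)_{j∈ℤ} satisfy I_j ≥ 0 and sup_j I_j ⟨j⟩^{2p} e^{2a|j|+2s⟨j⟩^θ} ≤ κ²r². Then for every q ∈ ℕ and every 0 < κ* ≤ 1, the projection Π^{2q−2} satisfies |Π^{2q−2}H|_{κ*r,s,η} ≤ κ*^{-2} (1 + κ*²/κ²)^q c_κ^q |H|_{r,s,η}, where c_κ := 1/ln(κ^{-2}) if 1/2 < κ² < 1 and c_κ := 2κ² if 0 < κ² ≤ 1/2. -/

import Mathlib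

open scoped ENNReal BigOperators Classical

noncomputable section

/-- Multi-indices: finitely supported functions `ℤ → ℕ`. -/
abbrev MIdx := ℤ →₀ ℕ

/-- Total degree `|α| = Σ_j α_j`. -/
def deg (α : MIdx) : ℕ := ∑ j ∈ α.support, α j

/-- Momentum `π(α - β) = Σ_j j (α_j - β_j)`. -/
def mom (α β : MIdx) : ℤ :=
  ∑ j ∈ α.support ∪ β.support, j * ((α j : ℤ) - (β j : ℤ))

/-- `⟨j⟩ = max(|j|, 1)` as a real number. -/
def jb (j : ℤ) : ℝ := max |(j : ℝ)| 1

/-- The weight `u₀(r)_j = r ⟨j⟩^{-p} e^{-(a|j| + s ⟨j⟩^θ)}`. -/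
def u0 (θ p a r s : ℝ) (j : ℤ) : ℝ :=
  r * (jb j ^ p * Real.exp (a * |(j : ℝ)| + s * jb j ^ θ))⁻¹

/-- The coefficient weight `c^{(j)}_{r,s,η}(α,β) = u₀^{α+β-2e_j} e^{η |π(α-β)|}`. -/
def cwt (θ p a r s η : ℝ) (j : ℤ) (α β : MIdx) : ℝ :=
  (∏ i ∈ insert j (α.support ∪ β.support),
      u0 θ p a r s i ^ (((α i : ℤ) + (β i : ℤ)) - if i = j then 2 else 0)) *
    Real.exp (η * |(mom α β : ℝ)|)

/-- The majorant norm `|H|_{r,s,η} = sup_j Σ_{α,β} |H_{α,β}| β_j u₀^{α+β-2e_j} e^{η|π(α-β)|}`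
(with values in `ℝ≥0∞`). -/
def hnorm (θ p a r s η : ℝ) (H : MIdx → MIdx → ℂ) : ℝ≥0∞ :=
  ⨆ j : ℤ, ∑' q : MIdx × MIdx,
    ENNReal.ofReal (‖H q.1 q.2‖ * (q.2 j : ℝ) * cwt θ p a r s η j q.1 q.2)

/-- A family of coefficients is a Hamiltonian: mass conservation (`H_{α,β} = 0` unless
`|α| = |β|`) and the reality condition `H_{β,α} = conj (H_{α,β})`. -/
def IsHam (H : MIdx → MIdx → ℂ) : Prop :=
  (∀ α β : MIdx, deg α ≠ deg β → H α β = 0) ∧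
  (∀ α β : MIdx, H β α = (starRingEnd ℂ) (H α β))

/-- The set `D_γ` of `γ`-Diophantine frequencies. -/
def Dio (γ : ℝ) : Set (ℤ → ℝ) :=
  {ω | (∀ j : ℤ, |ω j - (j : ℝ) ^ 2| ≤ 1 / 2) ∧
    ∀ ℓ : ℤ →₀ ℤ, ℓ ≠ 0 →
      γ * ∏ n ∈ ℓ.support, (1 + (ℓ n : ℝ) ^ 2 * jb n ^ 2)⁻¹ <
        |∑ j ∈ ℓ.support, ω j * (ℓ j : ℝ)|}

/-- The sup distance `|ω - ω'|_∞` (with values in `ℝ≥0∞`). -/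
def dsup (ω ω' : ℤ → ℝ) : ℝ≥0∞ := ⨆ j : ℤ, ENNReal.ofReal |ω j - ω' j|

/-- The weighted Lipschitz norm
`‖H‖_{r,s,η} = sup_{ω ∈ D_γ} |H(ω)|_{r,s,η} + γ sup_{ω≠ω'} |H(ω)-H(ω')|_{r,s,η} / |ω-ω'|_∞`. -/
def hnormLip (γ θ p a r s η : ℝ) (H : (ℤ → ℝ) → MIdx → MIdx → ℂ) : ℝ≥0∞ :=
  (⨆ ω ∈ Dio γ, hnorm θ p a r s η (H ω)) +
    ENNReal.ofReal γ *
      ⨆ ω ∈ Dio γ, ⨆ ω' ∈ Dio γ,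
        hnorm θ p a r s η (fun α β => H ω α β - H ω' α β) / dsup ω ω'
/-- Product of binomial coefficients `binom(m,δ) = ∏_i binom(m_i, δ_i)`. -/
def binomM (m δ : MIdx) : ℕ := ∏ i ∈ m.support, Nat.choose (m i) (δ i)

/-- `I^ν = ∏_i I_i^{ν_i}`. -/
def Ipow (I : ℤ → ℝ) (ν : MIdx) : ℝ := ∏ i ∈ ν.support, I i ^ ν i

/-- The coefficients of the projection `Π^{2q-2} H` relative to the torus of actions `I`:
writing `(A,B) = (γ+α, γ+β)` with `γ = min(A,B)` and `α, β` with disjoint supports,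
`(Π^{2q-2}H)_{A,B} = Σ_{δ ⪰ γ, |δ| = q} Σ_{m ⪰ δ} binom(m,δ) binom(δ,γ) (-1)^{|δ-γ|}
I^{m-γ} H_{m+α, m+β}` if `|γ| ≤ q`, and `0` otherwise. -/
def projCoef (I : ℤ → ℝ) (q : ℕ) (H : MIdx → MIdx → ℂ) (A B : MIdx) : ℂ :=
  let g : MIdx := A - (A - B)
  let α : MIdx := A - g
  let β : MIdx := B - g
  if deg g ≤ q then
    ∑' dm : MIdx × MIdx,
      (if g ≤ dm.1 ∧ deg dm.1 = q ∧ dm.1 ≤ dm.2 then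
        ((-1 : ℂ) ^ (deg dm.1 - deg g)) * (binomM dm.2 dm.1 : ℂ) * (binomM dm.1 g : ℂ) *
          ((Ipow I (dm.2 - g) : ℝ) : ℂ) * H (dm.2 + α) (dm.2 + β)
      else 0)
  else 0

/-- The constant `c_κ`. -/
def ckap (κ : ℝ) : ℝ := if 1 / 2 < κ ^ 2 then (Real.log ((κ ^ 2)⁻¹))⁻¹ else 2 * κ ^ 2

namespace ProjAux

lemma jb_pos (j : ℤ) : 0 < jb j := lt_of_lt_of_le one_pos (le_max_right _ _)

lemma u0_pos {θ p a r s : ℝ} (hr : 0 < r) (j : ℤ) : 0 < u0 θ p a r s j := by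
  have h1 : (0:ℝ) < jb j ^ p := Real.rpow_pos_of_pos (jb_pos j) p
  have h2 : (0:ℝ) < Real.exp (a * |(j:ℝ)| + s * jb j ^ θ) := Real.exp_pos _
  unfold u0; positivity

lemma u0_scale (θ p a r s κs : ℝ) (j : ℤ) :
    u0 θ p a (κs * r) s j = κs * u0 θ p a r s j := by
  unfold u0; ring

lemma deg_eq_sum {α : MIdx} {T : Finset ℤ} (h : α.support ⊆ T) :
    deg α = ∑ i ∈ T, α i :=
  Finset.sum_subset h (fun x _ hx => Finsupp.notMem_support_iff.mp hx)

lemma deg_add (x y : MIdx) : deg (x + y) = deg x + deg y := by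
  classical
  have hT : (x + y).support ⊆ x.support ∪ y.support := Finsupp.support_add
  rw [deg_eq_sum hT, deg_eq_sum (Finset.subset_union_left (s₂ := y.support)),
    deg_eq_sum (Finset.subset_union_right (s₁ := x.support)), ← Finset.sum_add_distrib]
  simp [Finsupp.add_apply]

lemma deg_mono {x y : MIdx} (h : x ≤ y) : deg x ≤ deg y := by
  have := deg_add x (y - x)
  rw [add_tsub_cancel_of_le h] at this
  omega

lemma gm_apply (A B : MIdx) (i : ℤ) : (A - (A - B)) i = min (A i) (B i) := by
  simp [Finsupp.tsub_apply, Nat.sub_sub_eq_min]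

lemma gm_le_left (A B : MIdx) : A - (A - B) ≤ A := tsub_le_self

lemma gm_le_right (A B : MIdx) : A - (A - B) ≤ B := by
  rw [Finsupp.le_def]
  intro i
  rw [gm_apply]
  exact min_le_right _ _

lemma gm_add (m α β : MIdx) :
    (m + α) - ((m + α) - (m + β)) = m + (α - (α - β)) := by
  ext i
  rw [gm_apply]
  simp only [Finsupp.add_apply, gm_apply]
  omega

lemma gm_al_be (A B : MIdx) :
    (A - (A - (A - B))) - ((A - (A - (A - B))) - (B - (A - (A - B)))) = 0 := by
  ext i
  simp only [Finsupp.tsub_apply, Finsupp.coe_zero, Pi.zero_apply]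
  omega

lemma mom_eq_sum {α β : MIdx} {T : Finset ℤ} (h : α.support ∪ β.support ⊆ T) :
    mom α β = ∑ i ∈ T, (i : ℤ) * ((α i : ℤ) - (β i : ℤ)) := by
  refine Finset.sum_subset h (fun x _ hx => ?_)
  have hα : α x = 0 := Finsupp.notMem_support_iff.mp
    (fun hc => hx (Finset.mem_union_left _ hc))
  have hβ : β x = 0 := Finsupp.notMem_support_iff.mp
    (fun hc => hx (Finset.mem_union_right _ hc))
  simp [hα, hβ]

lemma mom_shift (c α β : MIdx) : mom (c + α) (c + β) = mom α β := by
  classical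
  set T := ((c+α).support ∪ (c+β).support) ∪ (α.support ∪ β.support) with hT
  rw [mom_eq_sum (Finset.subset_union_left (s₂ := α.support ∪ β.support)),
    mom_eq_sum (Finset.subset_union_right (s₁ := (c+α).support ∪ (c+β).support))]
  refine Finset.sum_congr rfl (fun i _ => ?_)
  simp only [Finsupp.add_apply]
  push_cast
  ring

end ProjAux
namespace ProjAux

lemma prod_zpow_fixed (a : ℝ) (ha : a ≠ 0) (s : Finset ℤ) (f : ℤ → ℤ) :
    ∏ i ∈ s, a ^ f i = a ^ (∑ i ∈ s, f i) := by
  classical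
  induction s using Finset.cons_induction with
  | empty => simp
  | cons i s hi ih => rw [Finset.prod_cons, Finset.sum_cons, ih, zpow_add₀ ha]

lemma cwt_eq_prod {θ p a r s η : ℝ} {j : ℤ} {A B : MIdx} {T : Finset ℤ}
    (hj : j ∈ T) (hT : A.support ∪ B.support ⊆ T) :
    cwt θ p a r s η j A B =
      (∏ i ∈ T, u0 θ p a r s i ^ (((A i : ℤ) + (B i : ℤ)) - if i = j then 2 else 0)) *
        Real.exp (η * |(mom A B : ℝ)|) := by
  unfold cwt
  congr 1
  refine Finset.prod_subset ?_ (fun x _ hxn => ?_)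
  · intro x hx
    rcases Finset.mem_insert.mp hx with h | h
    · exact h ▸ hj
    · exact hT h
  · have hxj : x ≠ j := fun h => hxn (Finset.mem_insert.mpr (Or.inl h))
    have hA : A x = 0 := Finsupp.notMem_support_iff.mp
      (fun hc => hxn (Finset.mem_insert.mpr (Or.inr (Finset.mem_union_left _ hc))))
    have hB : B x = 0 := Finsupp.notMem_support_iff.mp
      (fun hc => hxn (Finset.mem_insert.mpr (Or.inr (Finset.mem_union_right _ hc))))
    simp [hxj, hA, hB]

lemma exp_sum {A B : MIdx} {j : ℤ} {T : Finset ℤ} (hj : j ∈ T)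
    (hA : A.support ⊆ T) (hB : B.support ⊆ T) :
    ∑ i ∈ T, (((A i : ℤ) + (B i : ℤ)) - if i = j then 2 else 0) =
      (deg A : ℤ) + (deg B : ℤ) - 2 := by
  rw [Finset.sum_sub_distrib, Finset.sum_add_distrib]
  have h2 : ∑ i ∈ T, (if i = j then (2:ℤ) else 0) = 2 := by
    rw [Finset.sum_ite_eq' T j (fun _ => (2:ℤ))]
    simp [hj]
  have hA' : ∑ i ∈ T, (A i : ℤ) = (deg A : ℤ) := by
    rw [deg_eq_sum hA]; push_cast; rfl
  have hB' : ∑ i ∈ T, (B i : ℤ) = (deg B : ℤ) := by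
    rw [deg_eq_sum hB]; push_cast; rfl
  rw [h2, hA', hB']

lemma cwt_scale {θ p a r s η κs : ℝ} (hκs : κs ≠ 0) (j : ℤ) (A B : MIdx) :
    cwt θ p a (κs * r) s η j A B =
      κs ^ ((deg A : ℤ) + (deg B : ℤ) - 2) * cwt θ p a r s η j A B := by
  unfold cwt
  rw [← mul_assoc]
  congr 1
  have hstep : ∀ i ∈ insert j (A.support ∪ B.support),
      u0 θ p a (κs * r) s i ^ (((A i : ℤ) + (B i : ℤ)) - if i = j then 2 else 0) =
        κs ^ (((A i : ℤ) + (B i : ℤ)) - if i = j then 2 else 0) *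
          u0 θ p a r s i ^ (((A i : ℤ) + (B i : ℤ)) - if i = j then 2 else 0) := by
    intro i _
    rw [u0_scale, mul_zpow]
  rw [Finset.prod_congr rfl hstep, Finset.prod_mul_distrib, prod_zpow_fixed κs hκs,
    exp_sum (Finset.mem_insert_self j _)
      (fun x hx => Finset.mem_insert.mpr (Or.inr (Finset.mem_union_left _ hx)))
      (fun x hx => Finset.mem_insert.mpr (Or.inr (Finset.mem_union_right _ hx)))]

lemma Ipow_eq_prod {I : ℤ → ℝ} {ν : MIdx} {T : Finset ℤ} (hT : ν.support ⊆ T) :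
    Ipow I ν = ∏ i ∈ T, I i ^ ν i := by
  refine Finset.prod_subset hT (fun x _ hx => ?_)
  rw [Finsupp.notMem_support_iff.mp hx, pow_zero]

lemma Ibound {θ p a r s κ : ℝ} (hr : 0 < r) {I : ℤ → ℝ}
    (hIb : ∀ j : ℤ,
      I j * (jb j ^ (2 * p) * Real.exp (2 * a * |(j : ℝ)| + 2 * s * jb j ^ θ)) ≤
        κ ^ 2 * r ^ 2) :
    ∀ j, I j ≤ κ ^ 2 * (u0 θ p a r s j) ^ 2 := by
  intro j
  set X := a * |(j : ℝ)| + s * jb j ^ θ with hX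
  set D := jb j ^ p * Real.exp X with hD
  have hDpos : 0 < D := by
    have := Real.rpow_pos_of_pos (jb_pos j) p
    have := Real.exp_pos X
    positivity
  have hD2 : jb j ^ (2 * p) * Real.exp (2 * a * |(j : ℝ)| + 2 * s * jb j ^ θ) = D ^ 2 := by
    have h1 : jb j ^ (2 * p) = jb j ^ p * jb j ^ p := by
      rw [← Real.rpow_add (jb_pos j)]; congr 1; ring
    have h2 : Real.exp (2 * a * |(j : ℝ)| + 2 * s * jb j ^ θ) = Real.exp X * Real.exp X := by
      rw [← Real.exp_add]; congr 1; rw [hX]; ring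
    rw [h1, h2, hD]; ring
  have h := hIb j
  rw [hD2] at h
  have hu : κ ^ 2 * (u0 θ p a r s j) ^ 2 = (κ ^ 2 * r ^ 2) * (D ^ 2)⁻¹ := by
    unfold u0; rw [← hX, ← hD]; ring
  rw [hu, ← div_eq_mul_inv, le_div_iff₀ (by positivity)]
  exact h

lemma core_ineq (θ p a : ℝ) {κ r s η κs : ℝ} (hκ0 : 0 < κ) (hr : 0 < r)
    (hκs0 : 0 < κs) (hκs1 : κs ≤ 1) (I : ℤ → ℝ) (hI : ∀ i, 0 ≤ I i)
    (hIb2 : ∀ i, I i ≤ κ ^ 2 * (u0 θ p a r s i) ^ 2)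
    (j : ℤ) (g α β m : MIdx) (hgm : g ≤ m) :
    (((g + β) j : ℝ)) * cwt θ p a (κs * r) s η j (g + α) (g + β) * Ipow I (m - g) ≤
      ((κs ^ 2 / κ ^ 2) ^ deg g * κ ^ (2 * deg m) * (κs ^ 2)⁻¹) *
        ((((m + β) j : ℝ)) * cwt θ p a r s η j (m + α) (m + β)) := by
  classical
  set u := u0 θ p a r s with hu
  set T : Finset ℤ := insert j ((((g+α).support ∪ (g+β).support) ∪
    ((m+α).support ∪ (m+β).support)) ∪ (m-g).support) with hTdef
  have hjT : j ∈ T := Finset.mem_insert_self _ _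
  have hT1 : (g+α).support ∪ (g+β).support ⊆ T := fun x hx =>
    Finset.mem_insert.mpr (Or.inr (Finset.mem_union_left _ (Finset.mem_union_left _ hx)))
  have hT2 : (m+α).support ∪ (m+β).support ⊆ T := fun x hx =>
    Finset.mem_insert.mpr (Or.inr (Finset.mem_union_left _ (Finset.mem_union_right _ hx)))
  have hT3 : (m-g).support ⊆ T := fun x hx =>
    Finset.mem_insert.mpr (Or.inr (Finset.mem_union_right _ hx))
  set E := Real.exp (η * |(mom (g+α) (g+β) : ℝ)|) with hE
  have hEpos : 0 < E := Real.exp_pos _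
  have hEE : Real.exp (η * |(mom (m+α) (m+β) : ℝ)|) = E := by
    rw [hE, mom_shift, mom_shift]
  set z1 : ℤ → ℤ := fun i => ((((g+α) i : ℤ)) + (((g+β) i : ℤ)) - if i = j then 2 else 0) with hz1
  set z2 : ℤ → ℤ := fun i => ((((m+α) i : ℤ)) + (((m+β) i : ℤ)) - if i = j then 2 else 0) with hz2
  have hupos : ∀ i, 0 < u i := u0_pos hr
  have hc1 : cwt θ p a (κs*r) s η j (g+α) (g+β) =
      κs ^ ((deg (g+α) : ℤ) + (deg (g+β) : ℤ) - 2) * ((∏ i ∈ T, u i ^ z1 i) * E) := by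
    rw [cwt_scale (ne_of_gt hκs0), cwt_eq_prod hjT hT1]
  have hc2 : cwt θ p a r s η j (m+α) (m+β) = (∏ i ∈ T, u i ^ z2 i) * E := by
    rw [cwt_eq_prod hjT hT2, hEE]
  have hIp : Ipow I (m-g) = ∏ i ∈ T, I i ^ ((m-g) i) := Ipow_eq_prod hT3
  set P1 := ∏ i ∈ T, u i ^ z1 i with hP1
  set P2 := ∏ i ∈ T, u i ^ z2 i with hP2
  set Q := ∏ i ∈ T, I i ^ ((m-g) i) with hQ
  have hP1n : 0 ≤ P1 := Finset.prod_nonneg fun i _ => (zpow_pos (hupos i) _).le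
  have hP2n : 0 ≤ P2 := Finset.prod_nonneg fun i _ => (zpow_pos (hupos i) _).le
  have hQn : 0 ≤ Q := Finset.prod_nonneg fun i _ => pow_nonneg (hI i) _
  have key : P1 * Q ≤ κ ^ (2 * deg (m-g)) * P2 := by
    have h2 : κ ^ (2 * deg (m-g)) = ∏ i ∈ T, κ ^ (2 * ((m-g) i)) := by
      rw [Finset.prod_pow_eq_pow_sum, ← Finset.mul_sum, ← deg_eq_sum hT3]
    rw [hP1, hQ, hP2, h2, ← Finset.prod_mul_distrib, ← Finset.prod_mul_distrib]
    refine Finset.prod_le_prod (fun i _ => ?_) (fun i _ => ?_)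
    · exact mul_nonneg (zpow_pos (hupos i) _).le (pow_nonneg (hI i) _)
    · have hgi : g i ≤ m i := Finsupp.le_def.mp hgm i
      have hz : z2 i = z1 i + 2 * ((m-g) i) := by
        simp only [hz1, hz2, Finsupp.add_apply, Finsupp.tsub_apply]
        push_cast [Nat.cast_sub hgi]
        ring
      have hb : I i ^ ((m-g) i) ≤ (κ ^ 2 * u i ^ 2) ^ ((m-g) i) :=
        pow_le_pow_left₀ (hI i) (hIb2 i) _
      calc u i ^ z1 i * I i ^ ((m-g) i) ≤ u i ^ z1 i * (κ^2 * u i ^ 2) ^ ((m-g) i) :=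
            mul_le_mul_of_nonneg_left hb (zpow_pos (hupos i) _).le
        _ = κ ^ (2 * ((m-g) i)) * u i ^ z2 i := by
            rw [hz, zpow_add₀ (ne_of_gt (hupos i)), mul_pow, ← pow_mul, ← pow_mul]
            have : u i ^ (2 * ((m-g) i)) = u i ^ ((2 * ((m-g) i) : ℕ) : ℤ) := by
              rw [zpow_natCast]
            rw [this]
            push_cast
            ring
  have hBj : (((g+β) j : ℕ) : ℝ) ≤ (((m+β) j : ℕ) : ℝ) := by
    have hgj : g j ≤ m j := Finsupp.le_def.mp hgm j
    simp only [Finsupp.add_apply]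
    exact_mod_cast Nat.add_le_add_right hgj _
  have hκse : κs ^ ((deg (g+α) : ℤ) + (deg (g+β) : ℤ) - 2) ≤ κs ^ (2 * deg g) * (κs^2)⁻¹ := by
    have he : (deg (g+α) : ℤ) + (deg (g+β) : ℤ) - 2 =
        ((2 * deg g : ℕ) : ℤ) + (((deg α + deg β : ℕ) : ℤ) + (-2)) := by
      rw [deg_add, deg_add]; push_cast; ring
    rw [he, zpow_add₀ (ne_of_gt hκs0), zpow_add₀ (ne_of_gt hκs0), zpow_natCast, zpow_natCast]
    have h1 : κs ^ (deg α + deg β) ≤ 1 := pow_le_one₀ hκs0.le hκs1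
    have h2 : κs ^ (-2 : ℤ) = (κs ^ 2)⁻¹ := by
      rw [zpow_neg, zpow_two, ← pow_two]
    rw [h2]
    have h3 : (0:ℝ) < (κs ^ 2)⁻¹ := by positivity
    have h4 : (0:ℝ) ≤ κs ^ (2 * deg g) := by positivity
    calc κs ^ (2 * deg g) * (κs ^ (deg α + deg β) * (κs^2)⁻¹)
        ≤ κs ^ (2 * deg g) * (1 * (κs^2)⁻¹) := by
          apply mul_le_mul_of_nonneg_left _ h4
          exact mul_le_mul_of_nonneg_right h1 h3.le
      _ = κs ^ (2 * deg g) * (κs^2)⁻¹ := by ring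
  have hcoef : (κs ^ 2 / κ ^ 2) ^ deg g * κ ^ (2 * deg m) * (κs ^ 2)⁻¹ =
      (κs ^ (2 * deg g) * (κs^2)⁻¹) * κ ^ (2 * deg (m-g)) := by
    have hdm : deg m = deg g + deg (m - g) := by
      conv_lhs => rw [← add_tsub_cancel_of_le hgm]
      exact deg_add g (m - g)
    have hκne : (κ:ℝ) ≠ 0 := ne_of_gt hκ0
    rw [hdm, div_pow, ← pow_mul, ← pow_mul]
    field_simp
    ring
  calc (((g+β) j : ℕ) : ℝ) * cwt θ p a (κs*r) s η j (g+α) (g+β) * Ipow I (m-g)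
      = κs ^ ((deg (g+α) : ℤ) + (deg (g+β) : ℤ) - 2) *
          ((((g+β) j : ℕ) : ℝ) * (P1 * Q) * E) := by rw [hc1, hIp]; ring
    _ ≤ (κs ^ (2 * deg g) * (κs^2)⁻¹) *
          ((((m+β) j : ℕ) : ℝ) * (κ ^ (2 * deg (m-g)) * P2) * E) := by
        refine mul_le_mul hκse ?_ ?_ (by positivity)
        · refine mul_le_mul_of_nonneg_right ?_ hEpos.le
          refine mul_le_mul hBj key (by positivity) (by positivity)
        · have : (0:ℝ) ≤ P1 * Q := mul_nonneg hP1n hQn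
          positivity
    _ = ((κs ^ 2 / κ ^ 2) ^ deg g * κ ^ (2 * deg m) * (κs ^ 2)⁻¹) *
          ((((m+β) j : ℕ) : ℝ) * cwt θ p a r s η j (m+α) (m+β)) := by
        rw [hcoef, hc2]; ring

end ProjAux
namespace ProjAux

lemma binom_row_sum (n : ℕ) {t : ℝ} :
    ∑ k ∈ Finset.range (n + 1), (n.choose k : ℝ) * t ^ k = (1 + t) ^ n := by
  rw [add_comm (1:ℝ) t, add_pow]
  refine Finset.sum_congr rfl (fun k _ => ?_)
  ring

lemma L1 (δ : MIdx) {t : ℝ} (ht : 0 ≤ t) :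
    ∑ g ∈ Finset.Iic δ, (binomM δ g : ℝ) * t ^ deg g ≤ (1 + t) ^ deg δ := by
  classical
  set s := δ.support with hs
  set c : ℤ → ℕ → ℝ := fun i k => ((δ i).choose k : ℝ) * t ^ k with hc
  have hterm : ∀ g ∈ Finset.Iic δ, (binomM δ g : ℝ) * t ^ deg g = ∏ i ∈ s, c i (g i) := by
    intro g hg
    have hgle : g ≤ δ := Finset.mem_Iic.mp hg
    have hsup : g.support ⊆ s := by
      intro i hi
      rw [Finsupp.mem_support_iff] at hi ⊢
      have := Finsupp.le_def.mp hgle i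
      omega
    have hdeg : deg g = ∑ i ∈ s, g i := deg_eq_sum hsup
    simp only [hc]
    rw [Finset.prod_mul_distrib, Finset.prod_pow_eq_pow_sum, ← hdeg]
    unfold binomM
    rw [Nat.cast_prod]
  set F : ((i : ℤ) → i ∈ s → ℕ) → ℝ := fun pp => ∏ x ∈ s.attach, c x.1 (pp x.1 x.2) with hF
  set φ : MIdx → ((i : ℤ) → i ∈ s → ℕ) := fun g => (fun i _ => g i) with hφ
  have hinj : ∀ g ∈ Finset.Iic δ, ∀ g' ∈ Finset.Iic δ, φ g = φ g' → g = g' := by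
    intro g hg g' hg' h
    ext i
    by_cases hi : i ∈ s
    · have := congrFun h i
      exact congrFun this hi
    · have h1 : δ i = 0 := Finsupp.notMem_support_iff.mp hi
      have h2 := Finsupp.le_def.mp (Finset.mem_Iic.mp hg) i
      have h3 := Finsupp.le_def.mp (Finset.mem_Iic.mp hg') i
      omega
  calc ∑ g ∈ Finset.Iic δ, (binomM δ g : ℝ) * t ^ deg g
      = ∑ g ∈ Finset.Iic δ, F (φ g) := by
        refine Finset.sum_congr rfl (fun g hg => ?_)
        rw [hterm g hg, hF]
        exact (Finset.prod_attach s (fun i => c i (g i))).symm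
    _ = ∑ pp ∈ (Finset.Iic δ).image φ, F pp := (Finset.sum_image hinj).symm
    _ ≤ ∑ pp ∈ s.pi (fun i => Finset.range (δ i + 1)), F pp := by
        refine Finset.sum_le_sum_of_subset_of_nonneg ?_ (fun pp _ _ => ?_)
        · intro pp hpp
          obtain ⟨g, hg, rfl⟩ := Finset.mem_image.mp hpp
          rw [Finset.mem_pi]
          intro i hi
          rw [Finset.mem_range]
          exact Nat.lt_succ_of_le (Finsupp.le_def.mp (Finset.mem_Iic.mp hg) i)
        · refine Finset.prod_nonneg (fun x _ => ?_)
          simp only [hc]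
          positivity
    _ = ∏ i ∈ s, ∑ k ∈ Finset.range (δ i + 1), c i k := (Finset.prod_sum s _ _).symm
    _ = ∏ i ∈ s, (1 + t) ^ δ i := Finset.prod_congr rfl (fun i _ => binom_row_sum (δ i))
    _ = (1 + t) ^ deg δ := by rw [Finset.prod_pow_eq_pow_sum]; rfl

end ProjAux
namespace ProjAux

lemma tsum_indic_le (δ : MIdx) {t : ℝ} (ht : 0 ≤ t) :
    ∑' g : MIdx, (if g ≤ δ then ENNReal.ofReal ((binomM δ g : ℝ) * t ^ deg g) else 0) ≤
      ENNReal.ofReal ((1 + t) ^ deg δ) := by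
  classical
  rw [tsum_eq_sum (s := Finset.Iic δ)
    (fun b hb => if_neg (fun h => hb (Finset.mem_Iic.mpr h)))]
  rw [Finset.sum_congr rfl (fun g hg => if_pos (Finset.mem_Iic.mp hg)),
    ← ENNReal.ofReal_sum_of_nonneg (fun g _ => by positivity)]
  exact ENNReal.ofReal_le_ofReal (L1 δ ht)

lemma delta_bound {κ : ℝ} (hκ0 : 0 < κ) (hκ1 : κ < 1) (m₀ : MIdx) (q : ℕ) :
    ∑' δ : MIdx, (if δ ≤ m₀ ∧ deg δ = q then
        ENNReal.ofReal ((binomM m₀ δ : ℝ) * κ ^ (2 * deg m₀)) else 0) ≤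
      ENNReal.ofReal (ckap κ ^ q) := by
  classical
  have hκ2 : κ ^ 2 < 1 := by nlinarith
  rw [tsum_eq_sum (s := Finset.Iic m₀)
    (fun b hb => if_neg (fun h => hb (Finset.mem_Iic.mpr h.1)))]
  have hstep : ∀ δ ∈ Finset.Iic m₀,
      (if δ ≤ m₀ ∧ deg δ = q then
        ENNReal.ofReal ((binomM m₀ δ : ℝ) * κ ^ (2 * deg m₀)) else 0) =
      ENNReal.ofReal (if deg δ = q then (binomM m₀ δ : ℝ) * κ ^ (2 * deg m₀) else 0) := by
    intro δ hδ
    by_cases h : deg δ = q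
    · rw [if_pos ⟨Finset.mem_Iic.mp hδ, h⟩, if_pos h]
    · rw [if_neg (fun hc => h hc.2), if_neg h, ENNReal.ofReal_zero]
  have hnn : ∀ δ ∈ Finset.Iic m₀,
      0 ≤ (if deg δ = q then (binomM m₀ δ : ℝ) * κ ^ (2 * deg m₀) else 0) := by
    intro δ _
    split_ifs
    · positivity
    · exact le_refl 0
  rw [Finset.sum_congr rfl hstep, ← ENNReal.ofReal_sum_of_nonneg hnn]
  refine ENNReal.ofReal_le_ofReal ?_
  set K := κ ^ (2 * deg m₀) with hK
  have hKp : K = (κ ^ 2) ^ deg m₀ := by rw [hK, pow_mul]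
  have hK0 : 0 ≤ K := by positivity
  by_cases hhalf : 1 / 2 < κ ^ 2
  · set c := Real.log ((κ ^ 2)⁻¹) with hcdef
    have hc : 0 < c := Real.log_pos ((one_lt_inv₀ (by positivity)).mpr hκ2)
    have h1c : 1 + c ≤ (κ ^ 2)⁻¹ := by
      have h := Real.add_one_le_exp c
      rw [Real.exp_log (by positivity : (0:ℝ) < (κ ^ 2)⁻¹)] at h
      linarith
    have hcq : c ^ q * c⁻¹ ^ q = 1 := by
      rw [← mul_pow, mul_inv_cancel₀ (ne_of_gt hc), one_pow]
    have hterm : ∀ δ ∈ Finset.Iic m₀,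
        (if deg δ = q then (binomM m₀ δ : ℝ) * K else 0) ≤
          ((binomM m₀ δ : ℝ) * c ^ deg δ) * (c⁻¹ ^ q * K) := by
      intro δ _
      split_ifs with h
      · rw [h]
        refine le_of_eq ?_
        calc (binomM m₀ δ : ℝ) * K = (binomM m₀ δ : ℝ) * K * (c ^ q * c⁻¹ ^ q) := by
              rw [hcq, mul_one]
          _ = (binomM m₀ δ : ℝ) * c ^ q * (c⁻¹ ^ q * K) := by ring
      · positivity
    calc ∑ δ ∈ Finset.Iic m₀, (if deg δ = q then (binomM m₀ δ : ℝ) * K else 0)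
        ≤ ∑ δ ∈ Finset.Iic m₀, ((binomM m₀ δ : ℝ) * c ^ deg δ) * (c⁻¹ ^ q * K) :=
          Finset.sum_le_sum hterm
      _ = (∑ δ ∈ Finset.Iic m₀, (binomM m₀ δ : ℝ) * c ^ deg δ) * (c⁻¹ ^ q * K) :=
          (Finset.sum_mul _ _ _).symm
      _ ≤ (1 + c) ^ deg m₀ * (c⁻¹ ^ q * K) :=
          mul_le_mul_of_nonneg_right (L1 m₀ hc.le) (by positivity)
      _ ≤ c⁻¹ ^ q := by
          rw [hKp]
          have h2 : (1 + c) ^ deg m₀ * (κ ^ 2) ^ deg m₀ ≤ 1 := by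
            rw [← mul_pow]
            refine pow_le_one₀ (by positivity) ?_
            calc (1 + c) * κ ^ 2 ≤ (κ ^ 2)⁻¹ * κ ^ 2 :=
                  mul_le_mul_of_nonneg_right h1c (by positivity)
              _ = 1 := inv_mul_cancel₀ (by positivity)
          calc (1 + c) ^ deg m₀ * (c⁻¹ ^ q * (κ ^ 2) ^ deg m₀)
              = ((1 + c) ^ deg m₀ * (κ ^ 2) ^ deg m₀) * c⁻¹ ^ q := by ring
            _ ≤ 1 * c⁻¹ ^ q := mul_le_mul_of_nonneg_right h2 (by positivity)
            _ = c⁻¹ ^ q := one_mul _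
      _ = ckap κ ^ q := by rw [ckap, if_pos hhalf]
  · have hck : ckap κ = 2 * κ ^ 2 := by rw [ckap, if_neg hhalf]
    rw [hck]
    by_cases hq : q ≤ deg m₀
    · have hterm : ∀ δ ∈ Finset.Iic m₀,
          (if deg δ = q then (binomM m₀ δ : ℝ) * K else 0) ≤
            ((binomM m₀ δ : ℝ) * 1 ^ deg δ) * K := by
        intro δ _
        split_ifs
        · rw [one_pow, mul_one]
        · positivity
      calc ∑ δ ∈ Finset.Iic m₀, (if deg δ = q then (binomM m₀ δ : ℝ) * K else 0)
          ≤ ∑ δ ∈ Finset.Iic m₀, ((binomM m₀ δ : ℝ) * 1 ^ deg δ) * K :=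
            Finset.sum_le_sum hterm
        _ = (∑ δ ∈ Finset.Iic m₀, (binomM m₀ δ : ℝ) * 1 ^ deg δ) * K :=
            (Finset.sum_mul _ _ _).symm
        _ ≤ (1 + 1) ^ deg m₀ * K :=
            mul_le_mul_of_nonneg_right (L1 m₀ zero_le_one) hK0
        _ = (2 * κ ^ 2) ^ deg m₀ := by rw [hKp, ← mul_pow]; norm_num
        _ ≤ (2 * κ ^ 2) ^ q :=
            pow_le_pow_of_le_one (by positivity) (by nlinarith) hq
    · rw [Finset.sum_eq_zero]
      · positivity
      · intro δ hδ
        refine if_neg (fun h => hq ?_)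
        rw [← h]
        exact deg_mono (Finset.mem_Iic.mp hδ)

lemma ofReal_norm_tsum_mul_le {ι : Type*} (f : ι → ℂ) (c : ℝ) (hc : 0 ≤ c) :
    ENNReal.ofReal (‖∑' i, f i‖ * c) ≤ ∑' i, ENNReal.ofReal (‖f i‖ * c) := by
  by_cases hs : Summable f
  · have hn : Summable fun i => ‖f i‖ := summable_norm_iff.mpr hs
    calc ENNReal.ofReal (‖∑' i, f i‖ * c)
        ≤ ENNReal.ofReal ((∑' i, ‖f i‖) * c) :=
          ENNReal.ofReal_le_ofReal
            (mul_le_mul_of_nonneg_right (norm_tsum_le_tsum_norm hn) hc)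
      _ = ENNReal.ofReal (∑' i, ‖f i‖ * c) := by rw [tsum_mul_right]
      _ = ∑' i, ENNReal.ofReal (‖f i‖ * c) :=
          ENNReal.ofReal_tsum_of_nonneg (fun i => by positivity) (hn.mul_right c)
  · rw [tsum_eq_zero_of_not_summable hs]
    simp

end ProjAux
namespace ProjAux

lemma cwt_pos {θ p a r s η : ℝ} (hr : 0 < r) (j : ℤ) (A B : MIdx) :
    0 < cwt θ p a r s η j A B := by
  unfold cwt
  have hu := u0_pos (θ := θ) (p := p) (a := a) (s := s) hr
  exact mul_pos (Finset.prod_pos fun i _ => zpow_pos (hu i) _) (Real.exp_pos _)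

lemma Ipow_nonneg {I : ℤ → ℝ} (hI : ∀ i, 0 ≤ I i) (ν : MIdx) : 0 ≤ Ipow I ν :=
  Finset.prod_nonneg fun i _ => pow_nonneg (hI i) _

end ProjAux

open ProjAux

set_option maxHeartbeats 2000000

/-- Proposition `proiettotutto` (ii): if `I_j ≥ 0` with
`sup_j I_j ⟨j⟩^{2p} e^{2a|j|+2s⟨j⟩^θ} ≤ κ²r²`, then for every `q ∈ ℕ` and `0 < κ* ≤ 1`,
`|Π^{2q-2}H|_{κ*r,s,η} ≤ κ*^{-2} (1 + κ*²/κ²)^q c_κ^q |H|_{r,s,η}`. -/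
theorem projection_bound
    (θ p a : ℝ) (hθ0 : 0 < θ) (hθ1 : θ < 1) (hp : 1 < p) (ha : 0 ≤ a)
    (κ r s η : ℝ) (hκ0 : 0 < κ) (hκ1 : κ < 1) (hr : 0 < r) (hs : 0 < s) (hη : 0 ≤ η)
    (I : ℤ → ℝ) (hI : ∀ j, 0 ≤ I j)
    (hIb : ∀ j : ℤ,
      I j * (jb j ^ (2 * p) * Real.exp (2 * a * |(j : ℝ)| + 2 * s * jb j ^ θ)) ≤
        κ ^ 2 * r ^ 2)
    (H : MIdx → MIdx → ℂ) (hH : IsHam H)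
    (q : ℕ) (κs : ℝ) (hκs0 : 0 < κs) (hκs1 : κs ≤ 1) :
    hnorm θ p a (κs * r) s η (projCoef I q H) ≤
      ENNReal.ofReal ((κs ^ 2)⁻¹ * (1 + κs ^ 2 / κ ^ 2) ^ q * ckap κ ^ q) *
        hnorm θ p a r s η H := by
  classical
  have hIb2 : ∀ i, I i ≤ κ ^ 2 * (u0 θ p a r s i) ^ 2 := Ibound hr hIb
  set x : ℝ := κs ^ 2 / κ ^ 2 with hxdef
  have hx0 : 0 ≤ x := by positivity
  set C : ℝ≥0∞ := ENNReal.ofReal ((κs ^ 2)⁻¹ * (1 + x) ^ q * ckap κ ^ q) with hC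
  have hck0 : 0 ≤ ckap κ := by
    rw [ckap]
    split_ifs with h
    · refine inv_nonneg.mpr (Real.log_nonneg ((one_le_inv₀ (by positivity)).mpr ?_))
      nlinarith
    · positivity
  have hκsr : 0 < κs * r := mul_pos hκs0 hr
  rw [hnorm]
  refine iSup_le (fun j => ?_)
  -- the comparison weight
  set Fr : MIdx × MIdx → ℝ≥0∞ := fun y =>
    ENNReal.ofReal (‖H y.1 y.2‖ * (y.2 j : ℝ) * cwt θ p a r s η j y.1 y.2) with hFr
  have hFrle : ∑' y : MIdx × MIdx, Fr y ≤ hnorm θ p a r s η H := by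
    rw [hnorm]
    exact le_iSup (fun j => ∑' y : MIdx × MIdx,
      ENNReal.ofReal (‖H y.1 y.2‖ * (y.2 j : ℝ) * cwt θ p a r s η j y.1 y.2)) j
  set G : (MIdx × MIdx) → (MIdx × MIdx) → ℝ≥0∞ := fun AB dm =>
    if (AB.1 - (AB.1 - AB.2)) ≤ dm.1 ∧ deg dm.1 = q ∧ dm.1 ≤ dm.2 then
      ENNReal.ofReal ((binomM dm.2 dm.1 : ℝ) * (binomM dm.1 (AB.1 - (AB.1 - AB.2)) : ℝ) *
        Ipow I (dm.2 - (AB.1 - (AB.1 - AB.2))) *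
        (‖H (dm.2 + (AB.1 - (AB.1 - (AB.1 - AB.2))))
            (dm.2 + (AB.2 - (AB.1 - (AB.1 - AB.2))))‖ *
          (AB.2 j : ℝ) * cwt θ p a (κs * r) s η j AB.1 AB.2))
    else 0 with hG
  -- Step 1 : dominate the projected coefficient by a double sum
  have step1 : ∀ AB : MIdx × MIdx,
      ENNReal.ofReal (‖projCoef I q H AB.1 AB.2‖ * (AB.2 j : ℝ) *
        cwt θ p a (κs * r) s η j AB.1 AB.2) ≤ ∑' dm : MIdx × MIdx, G AB dm := by
    rintro ⟨A, B⟩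
    have hcw : 0 ≤ (B j : ℝ) * cwt θ p a (κs * r) s η j A B :=
      mul_nonneg (Nat.cast_nonneg _) (cwt_pos hκsr j A B).le
    by_cases hdg : deg (A - (A - B)) ≤ q
    · have hPC : projCoef I q H A B = ∑' dm : MIdx × MIdx,
          (if (A - (A - B)) ≤ dm.1 ∧ deg dm.1 = q ∧ dm.1 ≤ dm.2 then
            ((-1 : ℂ) ^ (deg dm.1 - deg (A - (A - B)))) * (binomM dm.2 dm.1 : ℂ) *
              (binomM dm.1 (A - (A - B)) : ℂ) *
              ((Ipow I (dm.2 - (A - (A - B))) : ℝ) : ℂ) *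
              H (dm.2 + (A - (A - (A - B)))) (dm.2 + (B - (A - (A - B))))
          else 0) := by
        show (if deg (A - (A - B)) ≤ q then _ else 0) = _
        rw [if_pos hdg]
      rw [hPC, mul_assoc]
      refine le_trans (ofReal_norm_tsum_mul_le _ _ hcw) (ENNReal.tsum_le_tsum fun dm => ?_)
      by_cases hcond : (A - (A - B)) ≤ dm.1 ∧ deg dm.1 = q ∧ dm.1 ≤ dm.2
      · rw [if_pos hcond]
        have hGv : G (A, B) dm = ENNReal.ofReal
            ((binomM dm.2 dm.1 : ℝ) * (binomM dm.1 (A - (A - B)) : ℝ) *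
              Ipow I (dm.2 - (A - (A - B))) *
              (‖H (dm.2 + (A - (A - (A - B)))) (dm.2 + (B - (A - (A - B))))‖ *
                (B j : ℝ) * cwt θ p a (κs * r) s η j A B)) := by
          rw [hG]; exact if_pos hcond
        rw [hGv]
        refine ENNReal.ofReal_le_ofReal (le_of_eq ?_)
        rw [norm_mul, norm_mul, norm_mul, norm_mul, norm_pow, norm_neg, norm_one, one_pow,
          Complex.norm_natCast, Complex.norm_natCast, Complex.norm_real,
          Real.norm_eq_abs, abs_of_nonneg (Ipow_nonneg hI _)]
        ring
      · rw [if_neg hcond]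
        have : G (A, B) dm = 0 := by rw [hG]; exact if_neg hcond
        rw [this]
        simp
    · have hPC : projCoef I q H A B = 0 := by
        show (if deg (A - (A - B)) ≤ q then _ else 0) = 0
        rw [if_neg hdg]
      rw [hPC]
      simp

  -- target pair and comparison ratio
  set gmf : MIdx × MIdx → MIdx := fun AB => AB.1 - (AB.1 - AB.2) with hgmf
  set tgt : (MIdx × MIdx) × (MIdx × MIdx) → MIdx × MIdx := fun σ =>
    (σ.2.2 + (σ.1.1 - gmf σ.1), σ.2.2 + (σ.1.2 - gmf σ.1)) with htgt
  set ratio : (MIdx × MIdx) × (MIdx × MIdx) → ℝ≥0∞ := fun σ =>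
    if gmf σ.1 ≤ σ.2.1 ∧ deg σ.2.1 = q ∧ σ.2.1 ≤ σ.2.2 then
      ENNReal.ofReal ((binomM σ.2.2 σ.2.1 : ℝ) * (binomM σ.2.1 (gmf σ.1) : ℝ) *
        (x ^ deg (gmf σ.1) * κ ^ (2 * deg σ.2.2) * (κs ^ 2)⁻¹))
    else 0 with hratio
  -- Step 3 : pointwise domination
  have step3 : ∀ σ : (MIdx × MIdx) × (MIdx × MIdx), G σ.1 σ.2 ≤ ratio σ * Fr (tgt σ) := by
    rintro ⟨⟨A, B⟩, δ, m⟩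
    by_cases hcond : (A - (A - B)) ≤ δ ∧ deg δ = q ∧ δ ≤ m
    · have hG1 : G (A, B) (δ, m) = ENNReal.ofReal
          ((binomM m δ : ℝ) * (binomM δ (A - (A - B)) : ℝ) * Ipow I (m - (A - (A - B))) *
            (‖H (m + (A - (A - (A - B)))) (m + (B - (A - (A - B))))‖ * (B j : ℝ) *
              cwt θ p a (κs * r) s η j A B)) := by
        rw [hG]; exact if_pos hcond
      have hr1 : ratio ((A, B), (δ, m)) = ENNReal.ofReal
          ((binomM m δ : ℝ) * (binomM δ (A - (A - B)) : ℝ) *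
            (x ^ deg (A - (A - B)) * κ ^ (2 * deg m) * (κs ^ 2)⁻¹)) := by
        rw [hratio]; exact if_pos hcond
      have htg : tgt ((A, B), (δ, m)) =
          (m + (A - (A - (A - B))), m + (B - (A - (A - B)))) := rfl
      have hFr1 : Fr (tgt ((A, B), (δ, m))) = ENNReal.ofReal
          (‖H (m + (A - (A - (A - B)))) (m + (B - (A - (A - B))))‖ *
            (((m + (B - (A - (A - B)))) j : ℕ) : ℝ) *
            cwt θ p a r s η j (m + (A - (A - (A - B)))) (m + (B - (A - (A - B))))) := by
        rw [htg, hFr]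
      rw [hG1, hr1, hFr1, ← ENNReal.ofReal_mul (by positivity)]
      refine ENNReal.ofReal_le_ofReal ?_
      have hgm : (A - (A - B)) ≤ m := le_trans hcond.1 hcond.2.2
      have hcore := core_ineq θ p a (η := η) hκ0 hr hκs0 hκs1 I hI hIb2 j (A - (A - B))
        (A - (A - (A - B))) (B - (A - (A - B))) m hgm
      rw [add_tsub_cancel_of_le (gm_le_left A B), add_tsub_cancel_of_le (gm_le_right A B),
        ← hxdef] at hcore
      set b1 : ℝ := (binomM m δ : ℝ) with hb1
      set b2 : ℝ := (binomM δ (A - (A - B)) : ℝ) with hb2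
      set hn : ℝ := ‖H (m + (A - (A - (A - B)))) (m + (B - (A - (A - B))))‖ with hhn
      set w1 : ℝ := cwt θ p a (κs * r) s η j A B with hw1
      set w2 : ℝ := cwt θ p a r s η j (m + (A - (A - (A - B)))) (m + (B - (A - (A - B)))) with hw2
      set ip : ℝ := Ipow I (m - (A - (A - B))) with hip
      set cf : ℝ := x ^ deg (A - (A - B)) * κ ^ (2 * deg m) * (κs ^ 2)⁻¹ with hcf
      have hnn : (0:ℝ) ≤ b1 * b2 * hn := by positivity
      calc b1 * b2 * ip * (hn * (B j : ℝ) * w1)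
          = (b1 * b2 * hn) * ((B j : ℝ) * w1 * ip) := by ring
        _ ≤ (b1 * b2 * hn) *
              (cf * ((((m + (B - (A - (A - B)))) j : ℕ) : ℝ) * w2)) :=
            mul_le_mul_of_nonneg_left hcore hnn
        _ = b1 * b2 * cf *
              (hn * (((m + (B - (A - (A - B)))) j : ℕ) : ℝ) * w2) := by ring
    · have h0 : G (A, B) (δ, m) = 0 := by rw [hG]; exact if_neg hcond
      rw [h0]
      exact zero_le
  -- Step 4 : fiberwise summation of the ratios
  have fibsum : ∀ y : MIdx × MIdx,
      ∑' σf : ↑(tgt ⁻¹' {y}), ratio σf.1 ≤ C := by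
    intro y
    set m₀ : MIdx := y.1 - (y.1 - y.2) with hm₀
    set Ra : MIdx × MIdx → ℝ≥0∞ := fun dg =>
      if dg.2 ≤ dg.1 ∧ deg dg.1 = q ∧ dg.1 ≤ m₀ then
        ENNReal.ofReal ((binomM m₀ dg.1 : ℝ) * (binomM dg.1 dg.2 : ℝ) *
          (x ^ deg dg.2 * κ ^ (2 * deg m₀) * (κs ^ 2)⁻¹))
      else 0 with hRa
    set f : ↑(tgt ⁻¹' {y}) → ℝ≥0∞ :=
      fun σf => ratio σf.1 with hf
    have hstruct : ∀ σf : ↑(tgt ⁻¹' {y}), f σf ≠ 0 →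
        σf.1.2.2 = m₀ ∧ σf.1.1.1 = gmf σf.1.1 + (y.1 - m₀) ∧
          σf.1.1.2 = gmf σf.1.1 + (y.2 - m₀) ∧
          (gmf σf.1.1 ≤ σf.1.2.1 ∧ deg σf.1.2.1 = q ∧ σf.1.2.1 ≤ σf.1.2.2) := by
      rintro ⟨⟨⟨A, B⟩, δ, m⟩, hymem⟩ hne
      have hy : tgt ((A, B), (δ, m)) = y := hymem
      have hcond : gmf (A, B) ≤ δ ∧ deg δ = q ∧ δ ≤ m := by
        by_contra hc
        exact hne (by simp only [hf, hratio]; exact if_neg hc)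
      have hy1 : m + (A - (A - (A - B))) = y.1 := congrArg Prod.fst hy
      have hy2 : m + (B - (A - (A - B))) = y.2 := congrArg Prod.snd hy
      have hm : m₀ = m := by
        rw [hm₀, ← hy1, ← hy2, gm_add, gm_al_be, add_zero]
      have hα : y.1 - m₀ = A - (A - (A - B)) := by rw [← hy1, hm, add_tsub_cancel_left]
      have hβ : y.2 - m₀ = B - (A - (A - B)) := by rw [← hy2, hm, add_tsub_cancel_left]
      refine ⟨hm.symm, ?_, ?_, hcond⟩
      · rw [hα]
        exact (add_tsub_cancel_of_le (gm_le_left A B)).symm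
      · rw [hβ]
        exact (add_tsub_cancel_of_le (gm_le_right A B)).symm
    have hsub : ∑' σf, f σf = ∑' z : ↑(Function.support f), f z.1 :=
      (tsum_subtype_eq_of_support_subset (Set.Subset.refl _)).symm
    set ι : ↑(Function.support f) → MIdx × MIdx := fun z => (z.1.1.2.1, gmf z.1.1.1) with hι
    have hmatch : ∀ z : ↑(Function.support f), f z.1 = Ra (ι z) := by
      rintro ⟨⟨⟨⟨A, B⟩, δ, m⟩, hy⟩, hzsup⟩
      have hne : f ⟨((A, B), (δ, m)), hy⟩ ≠ 0 := hzsup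
      obtain ⟨hm, hA, hB, hc⟩ := hstruct _ hne
      simp only at hm hc
      simp only [hf, hratio, hι, hRa]
      rw [if_pos hc, if_pos ⟨hc.1, hc.2.1, hm ▸ hc.2.2⟩, hm]
    have hinj : Function.Injective ι := by
      rintro ⟨⟨⟨⟨A, B⟩, δ, m⟩, hy⟩, hzs⟩ ⟨⟨⟨⟨A', B'⟩, δ', m'⟩, hy'⟩, hzs'⟩ hzz
      obtain ⟨hm, hA, hB, _⟩ := hstruct _ hzs
      obtain ⟨hm', hA', hB', _⟩ := hstruct _ hzs'
      simp only at hm hA hB hm' hA' hB'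
      have hδ : δ = δ' := congrArg Prod.fst hzz
      have hg : gmf (A, B) = gmf (A', B') := congrArg Prod.snd hzz
      have h1 : A = A' := by rw [hA, hA', hg]
      have h2 : B = B' := by rw [hB, hB', hg]
      have h3 : m = m' := by rw [hm, hm']
      refine Subtype.ext (Subtype.ext ?_)
      show ((A, B), (δ, m)) = ((A', B'), (δ', m'))
      rw [h1, h2, h3, hδ]
    have hfinal : ∑' dg : MIdx × MIdx, Ra dg ≤ C := by
      have hprod : ∑' dg : MIdx × MIdx, Ra dg = ∑' d1 : MIdx, ∑' d2 : MIdx, Ra (d1, d2) :=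
        ENNReal.tsum_prod (f := fun d1 d2 => Ra (d1, d2))
      rw [hprod]
      have hin : ∀ δ : MIdx, ∑' g : MIdx, Ra (δ, g) ≤
          (if δ ≤ m₀ ∧ deg δ = q then
            ENNReal.ofReal ((binomM m₀ δ : ℝ) * κ ^ (2 * deg m₀)) else 0) *
            ENNReal.ofReal ((1 + x) ^ q * (κs ^ 2)⁻¹) := by
        intro δ
        by_cases hcδ : δ ≤ m₀ ∧ deg δ = q
        · rw [if_pos hcδ]
          have h1 : ∀ g : MIdx, Ra (δ, g) =
              (if g ≤ δ then ENNReal.ofReal ((binomM δ g : ℝ) * x ^ deg g) else 0) *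
                ENNReal.ofReal ((binomM m₀ δ : ℝ) *
                  (κ ^ (2 * deg m₀) * (κs ^ 2)⁻¹)) := by
            intro g
            simp only [hRa]
            by_cases hgδ : g ≤ δ
            · rw [if_pos ⟨hgδ, hcδ.2, hcδ.1⟩, if_pos hgδ,
                ← ENNReal.ofReal_mul (by positivity)]
              congr 1
              ring
            · rw [if_neg (fun hc => hgδ hc.1), if_neg hgδ, zero_mul]
          rw [tsum_congr h1, ENNReal.tsum_mul_right]
          have hsumle : ∑' g : MIdx,
              (if g ≤ δ then ENNReal.ofReal ((binomM δ g : ℝ) * x ^ deg g) else 0) ≤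
              ENNReal.ofReal ((1 + x) ^ q) := by
            refine le_trans (tsum_indic_le δ hx0) (le_of_eq ?_)
            rw [hcδ.2]
          calc (∑' g : MIdx,
                (if g ≤ δ then ENNReal.ofReal ((binomM δ g : ℝ) * x ^ deg g) else 0)) *
                ENNReal.ofReal ((binomM m₀ δ : ℝ) * (κ ^ (2 * deg m₀) * (κs ^ 2)⁻¹))
              ≤ ENNReal.ofReal ((1 + x) ^ q) *
                ENNReal.ofReal ((binomM m₀ δ : ℝ) * (κ ^ (2 * deg m₀) * (κs ^ 2)⁻¹)) :=
                mul_le_mul_left hsumle _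
            _ = ENNReal.ofReal ((binomM m₀ δ : ℝ) * κ ^ (2 * deg m₀)) *
                ENNReal.ofReal ((1 + x) ^ q * (κs ^ 2)⁻¹) := by
                rw [← ENNReal.ofReal_mul (by positivity),
                  ← ENNReal.ofReal_mul (by positivity)]
                congr 1
                ring
        · rw [if_neg hcδ, zero_mul]
          have h0 : ∀ g : MIdx, Ra (δ, g) = 0 := fun g => by
            simp only [hRa]
            exact if_neg (fun hc => hcδ ⟨hc.2.2, hc.2.1⟩)
          rw [tsum_congr h0]
          exact le_of_eq tsum_zero
      calc ∑' d1 : MIdx, ∑' d2 : MIdx, Ra (d1, d2)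
          ≤ ∑' δ : MIdx, (if δ ≤ m₀ ∧ deg δ = q then
              ENNReal.ofReal ((binomM m₀ δ : ℝ) * κ ^ (2 * deg m₀)) else 0) *
              ENNReal.ofReal ((1 + x) ^ q * (κs ^ 2)⁻¹) := ENNReal.tsum_le_tsum hin
        _ = (∑' δ : MIdx, (if δ ≤ m₀ ∧ deg δ = q then
              ENNReal.ofReal ((binomM m₀ δ : ℝ) * κ ^ (2 * deg m₀)) else 0)) *
              ENNReal.ofReal ((1 + x) ^ q * (κs ^ 2)⁻¹) := ENNReal.tsum_mul_right
        _ ≤ ENNReal.ofReal (ckap κ ^ q) * ENNReal.ofReal ((1 + x) ^ q * (κs ^ 2)⁻¹) :=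
              mul_le_mul_left (delta_bound hκ0 hκ1 m₀ q) _
        _ = C := by
              rw [hC, ← ENNReal.ofReal_mul (pow_nonneg hck0 q)]
              congr 1
              ring
    calc ∑' σf : ↑(tgt ⁻¹' {y}), ratio σf.1
        = ∑' z : ↑(Function.support f), f z.1 := hsub
      _ = ∑' z : ↑(Function.support f), Ra (ι z) := tsum_congr hmatch
      _ ≤ ∑' dg : MIdx × MIdx, Ra dg := ENNReal.tsum_comp_le_tsum_of_injective hinj Ra
      _ ≤ C := hfinal
  have step4 : ∑' σ : (MIdx × MIdx) × (MIdx × MIdx), ratio σ * Fr (tgt σ) ≤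
      C * ∑' y : MIdx × MIdx, Fr y := by
    have hdecomp : ∑' σ : (MIdx × MIdx) × (MIdx × MIdx), ratio σ * Fr (tgt σ) =
        ∑' (y : MIdx × MIdx) (σf : ↑(tgt ⁻¹' {y})),
          ratio σf.1 * Fr (tgt σf.1) :=
      (ENNReal.tsum_fiberwise (fun σ => ratio σ * Fr (tgt σ)) tgt).symm
    rw [hdecomp]
    calc ∑' (y : MIdx × MIdx) (σf : ↑(tgt ⁻¹' {y})),
          ratio σf.1 * Fr (tgt σf.1)
        = ∑' y : MIdx × MIdx,
            (∑' σf : ↑(tgt ⁻¹' {y}), ratio σf.1) * Fr y := by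
          refine tsum_congr (fun y => ?_)
          rw [← ENNReal.tsum_mul_right]
          exact tsum_congr (fun σf => by rw [show tgt σf.1 = y from σf.2])
      _ ≤ ∑' y : MIdx × MIdx, C * Fr y :=
          ENNReal.tsum_le_tsum (fun y => mul_le_mul_left (fibsum y) _)
      _ = C * ∑' y : MIdx × MIdx, Fr y := ENNReal.tsum_mul_left
  calc ∑' AB : MIdx × MIdx, ENNReal.ofReal (‖projCoef I q H AB.1 AB.2‖ * (AB.2 j : ℝ) *
        cwt θ p a (κs * r) s η j AB.1 AB.2)
      ≤ ∑' AB : MIdx × MIdx, ∑' dm : MIdx × MIdx, G AB dm := ENNReal.tsum_le_tsum step1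
    _ = ∑' σ : (MIdx × MIdx) × (MIdx × MIdx), G σ.1 σ.2 := (ENNReal.tsum_prod (f := G)).symm
    _ ≤ ∑' σ : (MIdx × MIdx) × (MIdx × MIdx), ratio σ * Fr (tgt σ) :=
        ENNReal.tsum_le_tsum step3
    _ ≤ C * ∑' y : MIdx × MIdx, Fr y := step4
    _ ≤ C * hnorm θ p a r s η H := mul_le_mul_right hFrle C


end
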